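/- Let N > 10^{10¹³} be an integer with largest prime factor p_r < log N, and suppose Σ_{p ≤ p_r} log(p/(p−1)) ≤ log log p_r + γ + 0.005586/(log p_r)². Then G(N) < e^γ + 0.00995/(log log N)², where G(n) = σ(n)/(n·log log n). -/

import Mathlib

open Real Finset

lemma series_le_log (t : ℝ) (h0 : 0 ≤ t) (h1 : t < 1) :
    2*(t + t^3/3 + t^5/5 + t^7/7) ≤ Real.log (1+t) - Real.log (1-t) := by
  set f : ℝ → ℝ := fun x => Real.log (1+x) - Real.log (1-x) - 2*(x + x^3/3 + x^5/5 + x^7/7) with hf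
  have key : ∀ x ∈ Set.Ico (0:ℝ) 1, ∀ y ∈ Set.Ico (0:ℝ) 1, x ≤ y → f x ≤ f y := by
    apply monotoneOn_of_deriv_nonneg (convex_Ico 0 1)
    · apply ContinuousOn.sub (ContinuousOn.sub ?_ ?_) (by fun_prop)
      · apply ContinuousOn.log (by fun_prop)
        intro x hx; simp only [Set.mem_Ico] at hx; nlinarith [hx.1, hx.2]
      · apply ContinuousOn.log (by fun_prop)
        intro x hx; simp only [Set.mem_Ico] at hx; nlinarith [hx.1, hx.2]
    · intro x hx
      rw [interior_Ico] at hx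
      have h1x : (0:ℝ) < 1 + x := by simp only [Set.mem_Ioo] at hx; linarith [hx.1]
      have h2x : (0:ℝ) < 1 - x := by simp only [Set.mem_Ioo] at hx; linarith [hx.2]
      apply DifferentiableAt.differentiableWithinAt
      apply DifferentiableAt.sub (DifferentiableAt.sub ?_ ?_) (by fun_prop)
      · exact (Real.differentiableAt_log h1x.ne').comp x (by fun_prop)
      · exact (Real.differentiableAt_log h2x.ne').comp x (by fun_prop)
    · intro x hx
      rw [interior_Ico] at hx
      simp only [Set.mem_Ioo] at hx
      have h1x : (0:ℝ) < 1 + x := by linarith [hx.1]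
      have h2x : (0:ℝ) < 1 - x := by linarith [hx.2]
      have d1 : HasDerivAt (fun y : ℝ => Real.log (1+y)) (1/(1+x)) x := by
        have := (Real.hasDerivAt_log h1x.ne').comp x ((hasDerivAt_id x).const_add 1)
        simpa [Function.comp_def] using this
      have d2 : HasDerivAt (fun y : ℝ => Real.log (1-y)) (-(1/(1-x))) x := by
        have := (Real.hasDerivAt_log h2x.ne').comp x ((hasDerivAt_id x).neg.const_add 1)
        simpa [div_eq_mul_inv, Function.comp_def] using this
      have d3 : HasDerivAt (fun y : ℝ => 2*(y + y^3/3 + y^5/5 + y^7/7))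
          (2*(1 + x^2 + x^4 + x^6)) x := by
        have : HasDerivAt (fun y : ℝ => 2*(y + y^3/3 + y^5/5 + y^7/7))
            (2*(1 + (3*x^2)/3 + (5*x^4)/5 + (7*x^6)/7)) x := by
          apply HasDerivAt.const_mul
          exact (((hasDerivAt_id x).add (((hasDerivAt_pow 3 x)).div_const 3)).add
            (((hasDerivAt_pow 5 x)).div_const 5)).add (((hasDerivAt_pow 7 x)).div_const 7)
        convert this using 1
        ring
      have hd : HasDerivAt f (1/(1+x) - (-(1/(1-x))) - 2*(1 + x^2 + x^4 + x^6)) x :=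
        (d1.sub d2).sub d3
      rw [hd.deriv]
      have e : 1/(1+x) - -(1/(1-x)) - 2*(1 + x^2 + x^4 + x^6) = (2*x^8) / ((1+x)*(1-x)) := by
        field_simp
        ring
      rw [e]
      positivity
  have h0' : f 0 = 0 := by simp [hf]
  have := key 0 (by constructor <;> norm_num) t ⟨h0, h1⟩ h0
  rw [h0'] at this
  simpa [hf, sub_nonneg] using this

lemma log_sub_log_ge (a b : ℝ) (hb : 0 < b) (hab : b ≤ a) :
    2*((a-b)/(a+b) + ((a-b)/(a+b))^3/3 + ((a-b)/(a+b))^5/5 + ((a-b)/(a+b))^7/7)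
      ≤ Real.log a - Real.log b := by
  have ha : 0 < a := lt_of_lt_of_le hb hab
  have hab2 : 0 < a + b := by linarith
  set t : ℝ := (a-b)/(a+b) with ht
  have h0 : 0 ≤ t := div_nonneg (by linarith) hab2.le
  have h1 : t < 1 := by
    rw [ht, div_lt_one hab2]; linarith
  have e1 : 1 + t = 2*a/(a+b) := by
    rw [eq_div_iff hab2.ne', add_mul, one_mul, ht, div_mul_cancel₀ _ hab2.ne']; ring
  have e2 : 1 - t = 2*b/(a+b) := by
    rw [eq_div_iff hab2.ne', sub_mul, one_mul, ht, div_mul_cancel₀ _ hab2.ne']; ring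
  have := series_le_log t h0 h1
  rwa [e1, e2, Real.log_div (by positivity) hab2.ne', Real.log_div (by positivity) hab2.ne',
    Real.log_mul two_ne_zero ha.ne', Real.log_mul two_ne_zero hb.ne',
    show Real.log 2 + Real.log a - Real.log (a+b) - (Real.log 2 + Real.log b - Real.log (a+b))
      = Real.log a - Real.log b by ring] at this

lemma harmonic_telescope {n : ℕ} (hn : 40 ≤ n) :
    (harmonic n : ℝ) ≤ (harmonic 40 : ℝ) + (Real.log (2*n+1) - Real.log 81) := by
  have hcast : ∀ m : ℕ, (harmonic m : ℝ) = ∑ i ∈ Finset.range m, ((i:ℝ)+1)⁻¹ := by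
    intro m
    rw [harmonic]
    push_cast
    rfl
  set f : ℕ → ℝ := fun i => Real.log (2*(i:ℝ)+1) with hf
  have hstep : ∀ i : ℕ, ((i:ℝ)+1)⁻¹ ≤ f (i+1) - f i := by
    intro i
    have key := log_sub_log_ge (2*(i:ℝ)+3) (2*i+1) (by positivity) (by linarith)
    have e : ((2*(i:ℝ)+3) - (2*i+1))/((2*(i:ℝ)+3) + (2*i+1)) = ((i:ℝ)+1)⁻¹/2 := by
      have hi : (0:ℝ) < (i:ℝ)+1 := by positivity
      field_simp
      ring
    rw [e] at key
    have h2 : (0:ℝ) ≤ ((i:ℝ)+1)⁻¹/2 := by positivity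
    have ef : f (i+1) = Real.log (2*(i:ℝ)+3) := by
      simp only [hf]
      push_cast
      ring_nf
    rw [ef]
    calc ((i:ℝ)+1)⁻¹ = 2*(((i:ℝ)+1)⁻¹/2) := by ring
    _ ≤ 2*((((i:ℝ)+1)⁻¹/2) + (((i:ℝ)+1)⁻¹/2)^3/3 + (((i:ℝ)+1)⁻¹/2)^5/5
        + (((i:ℝ)+1)⁻¹/2)^7/7) := by nlinarith [pow_nonneg h2 3, pow_nonneg h2 5, pow_nonneg h2 7]
    _ ≤ Real.log (2*(i:ℝ)+3) - Real.log (2*(i:ℝ)+1) := key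
  have tele : ∑ i ∈ Finset.Ico 40 n, (f (i+1) - f i) = f n - f 40 := by
    rw [Finset.sum_Ico_eq_sub _ hn, Finset.sum_range_sub f, Finset.sum_range_sub f]
    ring
  have split : (harmonic n : ℝ) = (harmonic 40 : ℝ) + ∑ i ∈ Finset.Ico 40 n, ((i:ℝ)+1)⁻¹ := by
    rw [hcast, hcast, ← Finset.sum_range_add_sum_Ico _ hn]
  have hbd : ∑ i ∈ Finset.Ico 40 n, ((i:ℝ)+1)⁻¹ ≤ f n - f 40 := by
    rw [← tele]
    exact Finset.sum_le_sum fun i _ => hstep i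
  have ef40 : f 40 = Real.log 81 := by norm_num [hf]
  have efn : f n = Real.log (2*(n:ℝ)+1) := rfl
  rw [split]
  rw [ef40, efn] at hbd
  linarith

lemma gamma_le : Real.eulerMascheroniConstant ≤ (harmonic 40 : ℝ) - Real.log 81 + Real.log 2 := by
  have hlim1 := Real.tendsto_harmonic_sub_log
  have hlim2 : Filter.Tendsto
      (fun n : ℕ => ((harmonic 40 : ℝ) - Real.log 81) + Real.log (2 + 1/(n:ℝ)))
      Filter.atTop (nhds (((harmonic 40 : ℝ) - Real.log 81) + Real.log 2)) := by
    apply Filter.Tendsto.const_add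
    have h1 : Filter.Tendsto (fun n : ℕ => (2:ℝ) + 1/(n:ℝ)) Filter.atTop (nhds 2) := by
      simpa using (tendsto_one_div_atTop_nhds_zero_nat.const_add (2:ℝ))
    exact ((Real.continuousAt_log (by norm_num)).tendsto.comp h1)
  have key : eulerMascheroniConstant ≤ ((harmonic 40 : ℝ) - Real.log 81) + Real.log 2 := by
    apply le_of_tendsto_of_tendsto hlim1 hlim2
    filter_upwards [Filter.eventually_ge_atTop 40] with n hn
    have hn0 : (0:ℝ) < (n:ℝ) := by
      have : (0:ℕ) < n := by omega
      exact_mod_cast this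
    have e : Real.log (2 + 1/(n:ℝ)) = Real.log (2*(n:ℝ)+1) - Real.log n := by
      rw [show (2:ℝ) + 1/(n:ℝ) = (2*(n:ℝ)+1)/n by field_simp,
        Real.log_div (by positivity) hn0.ne']
    have := harmonic_telescope hn
    simp only [e]
    linarith
  linarith

lemma exp_gamma_le : Real.exp Real.eulerMascheroniConstant ≤ 1.7812 := by
  have h40 : harmonic 40 = 2078178381193813/485721041551200 := by
    norm_num [harmonic, Finset.sum_range_succ]
  have hlog2 := Real.log_two_gt_d9
  have h32 := log_sub_log_ge 3 2 (by norm_num) (by norm_num)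
  have hT := log_sub_log_ge 1.7812 1 (by norm_num) (by norm_num)
  rw [Real.log_one] at hT
  have h81 : Real.log 81 = 4*Real.log 3 := by
    rw [show (81:ℝ) = 3^4 by norm_num, Real.log_pow]
    norm_num
  have h3 : Real.log 3 = Real.log 2 + (Real.log 3 - Real.log 2) := by ring
  have hγ := gamma_le
  rw [h40] at hγ
  have key : Real.eulerMascheroniConstant ≤ Real.log 1.7812 := by
    norm_num at h32 hT hγ ⊢
    nlinarith [h32, hT, hγ, hlog2, h81]
  calc Real.exp Real.eulerMascheroniConstant ≤ Real.exp (Real.log 1.7812) :=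
        Real.exp_le_exp.mpr key
  _ = 1.7812 := Real.exp_log (by norm_num)

lemma prime_pow_sum_le (p e : ℕ) (hp : p.Prime) :
    ((∑ k ∈ Finset.range (e+1), p ^ k : ℕ) : ℝ) ≤ (p:ℝ)^e * ((p:ℝ)/((p:ℝ)-1)) := by
  have hp1 : (1:ℝ) < (p:ℝ) := by exact_mod_cast hp.one_lt
  have hp0 : (0:ℝ) < (p:ℝ) - 1 := by linarith
  have e1 : ((∑ k ∈ Finset.range (e+1), p ^ k : ℕ) : ℝ)
      = ∑ k ∈ Finset.range (e+1), (p:ℝ) ^ k := by push_cast; rfl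
  rw [e1, show (p:ℝ)^e * ((p:ℝ)/((p:ℝ)-1)) = ((p:ℝ)^(e+1))/((p:ℝ)-1) by
    rw [pow_succ]; ring, le_div_iff₀ hp0, geom_sum_mul]
  nlinarith [pow_pos (by linarith : (0:ℝ) < (p:ℝ)) (e+1)]

lemma sum_divisors_le (N : ℕ) (hN : N ≠ 0) :
    (∑ d ∈ N.divisors, (d:ℝ)) ≤ (N:ℝ) * ∏ p ∈ N.primeFactors, (p:ℝ)/((p:ℝ)-1) := by
  have e1 : (∑ d ∈ N.divisors, (d:ℝ))
      = ((∑ d ∈ N.divisors, d : ℕ) : ℝ) := by push_cast; rfl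
  have e2n : ∏ p ∈ N.primeFactors, p ^ N.factorization p = N := by
    rw [← Nat.support_factorization]
    exact Nat.factorization_prod_pow_eq_self hN
  have e2 : (N:ℝ) = ∏ p ∈ N.primeFactors, (p:ℝ) ^ (N.factorization p) := by
    conv_lhs => rw [← e2n]
    push_cast
    rfl
  rw [e1, Nat.sum_divisors hN]
  push_cast
  rw [e2, ← Finset.prod_mul_distrib]
  apply Finset.prod_le_prod
  · intro p hp
    positivity
  · intro p hp
    have hpp := Nat.prime_of_mem_primeFactors hp
    have := prime_pow_sum_le p (N.factorization p) hpp
    push_cast at this ⊢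
    exact this

lemma key_ineq (u L : ℝ) (hu : Real.log 2 ≤ u) (hL : u < L) :
    Real.log u + 0.005586/u^2 < Real.log L + 0.005586/L^2 := by
  have hlog2 := Real.log_two_gt_d9
  have hu0 : (0:ℝ) < u := by linarith
  have hL0 : (0:ℝ) < L := by linarith
  have hu2 : (0.48:ℝ) ≤ u^2 := by nlinarith
  have h1 : Real.log u - Real.log L ≤ u/L - 1 := by
    have := Real.log_le_sub_one_of_pos (show (0:ℝ) < u/L by positivity)
    rwa [Real.log_div hu0.ne' hL0.ne'] at this
  have h2 : u/L - 1 = -((L-u)/L) := by field_simp; ring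
  have h3 : 0.005586/u^2 - 0.005586/L^2 < (L-u)/L := by
    rw [div_sub_div _ _ (by positivity) (by positivity), div_lt_div_iff₀ (by positivity) hL0]
    have h4 : 0.005586*(L+u) < u^2*L := by nlinarith
    nlinarith [mul_pos (sub_pos.mpr hL) hL0, sq_nonneg L, sq_nonneg u,
      mul_pos (mul_pos (sub_pos.mpr hL) hL0) hL0]
  have h5 : Real.log u - Real.log L ≤ -((L-u)/L) := by linarith
  linarith

lemma final_numeric (L : ℝ) (hL : 30 < L) :
    Real.exp Real.eulerMascheroniConstant * Real.exp (0.005586/L^2)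
      ≤ Real.exp Real.eulerMascheroniConstant + 0.00995/L^2 := by
  set E := Real.exp Real.eulerMascheroniConstant with hE
  set x : ℝ := 0.005586/L^2 with hx
  have hL0 : (0:ℝ) < L := by linarith
  have hx0 : (0:ℝ) < x := by positivity
  have hxs : x ≤ 0.0000063 := by
    rw [hx, div_le_iff₀ (by positivity)]
    nlinarith
  have hx1 : x < 1 := by linarith
  have h2 : Real.exp x * (1-x) ≤ 1 := by
    calc Real.exp x * (1-x) ≤ Real.exp x * Real.exp (-x) := by
          apply mul_le_mul_of_nonneg_left _ (Real.exp_pos x).le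
          linarith [Real.add_one_le_exp (-x)]
    _ = 1 := by rw [← Real.exp_add]; simp
  have h7 : Real.exp x ≤ 1 + 1.0000064*x := by
    nlinarith [Real.exp_pos x]
  have h1 : E ≤ 1.7812 := exp_gamma_le
  have hE0 : (0:ℝ) < E := Real.exp_pos _
  have h4 : (0.00995:ℝ)/L^2 = (4975/2793)*x := by
    rw [hx]
    field_simp
    ring
  rw [h4]
  nlinarith [mul_le_mul_of_nonneg_left h7 hE0.le, mul_pos hE0 hx0,
    mul_le_mul_of_nonneg_right h1 hx0.le]

/-- `G n = σ(n) / (n * log log n)`. -/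
noncomputable def G (n : ℕ) : ℝ :=
  (∑ d ∈ n.divisors, (d : ℝ)) / (n * Real.log (Real.log n))

theorem stmt_15 (N pr : ℕ) (hN : (N : ℝ) > 10 ^ (10 ^ 13 : ℕ))
    (hpr : pr ∈ N.primeFactors) (hmax : ∀ q ∈ N.primeFactors, q ≤ pr)
    (hlt : (pr : ℝ) < Real.log N)
    (hMertens : (∑ p ∈ (Finset.range (pr + 1)).filter Nat.Prime,
        Real.log ((p : ℝ) / ((p : ℝ) - 1))) ≤
      Real.log (Real.log pr) + Real.eulerMascheroniConstant +
        0.005586 / (Real.log pr) ^ 2) :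
    G N < Real.exp Real.eulerMascheroniConstant +
      0.00995 / (Real.log (Real.log N)) ^ 2 := by
  have hbig : (1:ℝ) < 10 ^ (10 ^ 13 : ℕ) := one_lt_pow₀ (by norm_num) (by norm_num)
  have hN1 : (1:ℝ) < (N:ℝ) := lt_trans hbig hN
  have hlogNbig : Real.log ((10:ℝ) ^ (10 ^ 13 : ℕ)) < Real.log N :=
    Real.log_lt_log (by positivity) hN
  rw [Real.log_pow, show ((10 ^ 13 : ℕ) : ℝ) = 10^13 by norm_num] at hlogNbig
  clear hN hbig
  have hN0 : (0:ℝ) < (N:ℝ) := lt_trans zero_lt_one hN1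
  have hNne : N ≠ 0 := by
    intro h
    rw [h] at hN1
    norm_num at hN1
  -- log N is big
  have hlog10 : (3:ℝ) * Real.log 2 ≤ Real.log 10 := by
    have : Real.log (2^3 : ℝ) ≤ Real.log 10 :=
      Real.log_le_log (by norm_num) (by norm_num)
    rwa [Real.log_pow] at this
  have hlogN1 : (2.0794415:ℝ)*10^13 < Real.log N := by
    nlinarith [Real.log_two_gt_d9]
  clear hlogNbig
  have he30 : Real.exp 30 < Real.log N := by
    have h1 : Real.exp 30 = Real.exp 1 ^ 30 := by
      rw [← Real.exp_nat_mul]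
      norm_num
    have h2 : Real.exp 1 ^ 30 < 2.7182818286 ^ 30 :=
      pow_lt_pow_left₀ Real.exp_one_lt_d9 (Real.exp_pos 1).le (by norm_num)
    have h3 : (2.7182818286:ℝ) ^ 30 < 2.0794415*10^13 := by norm_num
    linarith
  have hlogN0 : (0:ℝ) < Real.log N := lt_trans (Real.exp_pos 30) he30
  set L : ℝ := Real.log (Real.log N) with hLdef
  have hL30 : (30:ℝ) < L := by
    rw [hLdef, show (30:ℝ) = Real.log (Real.exp 30) from (Real.log_exp 30).symm]
    exact Real.log_lt_log (Real.exp_pos 30) he30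
  have hL0 : (0:ℝ) < L := by linarith
  -- pr facts
  have hprp : pr.Prime := Nat.prime_of_mem_primeFactors hpr
  have hpr2 : (2:ℝ) ≤ (pr:ℝ) := by exact_mod_cast hprp.two_le
  have hu2 : Real.log 2 ≤ Real.log pr := Real.log_le_log (by norm_num) hpr2
  have huL : Real.log pr < L := by
    rw [hLdef]
    exact Real.log_lt_log (by linarith) hlt
  -- chain
  have hchain1 : (∑ d ∈ N.divisors, (d:ℝ))
      ≤ (N:ℝ) * ∏ p ∈ N.primeFactors, (p:ℝ)/((p:ℝ)-1) := sum_divisors_le N hNne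
  set S : Finset ℕ := (Finset.range (pr + 1)).filter Nat.Prime with hSdef
  have hsub : N.primeFactors ⊆ S := by
    intro q hq
    rw [hSdef, Finset.mem_filter, Finset.mem_range]
    exact ⟨Nat.lt_succ_of_le (hmax q hq), Nat.prime_of_mem_primeFactors hq⟩
  have hfact : ∀ q ∈ S, (1:ℝ) ≤ (q:ℝ)/((q:ℝ)-1) := by
    intro q hq
    have hq2 : (2:ℝ) ≤ (q:ℝ) := by
      rw [hSdef, Finset.mem_filter] at hq
      exact_mod_cast hq.2.two_le
    rw [le_div_iff₀ (by linarith)]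
    linarith
  have hchain2 : ∏ p ∈ N.primeFactors, (p:ℝ)/((p:ℝ)-1) ≤ ∏ p ∈ S, (p:ℝ)/((p:ℝ)-1) := by
    rw [← Finset.prod_sdiff hsub]
    have h1 : (1:ℝ) ≤ ∏ p ∈ S \ N.primeFactors, (p:ℝ)/((p:ℝ)-1) := by
      calc (1:ℝ) = ∏ _p ∈ S \ N.primeFactors, (1:ℝ) := Finset.prod_const_one.symm
      _ ≤ ∏ p ∈ S \ N.primeFactors, (p:ℝ)/((p:ℝ)-1) :=
        Finset.prod_le_prod (fun i _ => zero_le_one)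
          (fun i hi => hfact i (Finset.mem_sdiff.mp hi).1)
    have h2 : (0:ℝ) ≤ ∏ p ∈ N.primeFactors, (p:ℝ)/((p:ℝ)-1) :=
      Finset.prod_nonneg fun q hq => le_trans zero_le_one (hfact q (hsub hq))
    nlinarith
  have hPpos : (0:ℝ) < ∏ p ∈ S, (p:ℝ)/((p:ℝ)-1) :=
    Finset.prod_pos fun q hq => lt_of_lt_of_le zero_lt_one (hfact q hq)
  have hlogP : Real.log (∏ p ∈ S, (p:ℝ)/((p:ℝ)-1))
      = ∑ p ∈ S, Real.log ((p:ℝ)/((p:ℝ)-1)) :=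
    Real.log_prod fun q hq => ne_of_gt (lt_of_lt_of_le zero_lt_one (hfact q hq))
  set Eg : ℝ := Real.exp Real.eulerMascheroniConstant with hEg
  set Ex : ℝ := Real.exp (0.005586/L^2) with hEx
  have hPlt : ∏ p ∈ S, (p:ℝ)/((p:ℝ)-1) < L * (Eg * Ex) := by
    have h1 : Real.log (∏ p ∈ S, (p:ℝ)/((p:ℝ)-1))
        < Real.log L + Real.eulerMascheroniConstant + 0.005586/L^2 := by
      rw [hlogP]
      have h2 := key_ineq (Real.log pr) L hu2 huL
      linarith [hMertens]
    calc ∏ p ∈ S, (p:ℝ)/((p:ℝ)-1)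
        = Real.exp (Real.log (∏ p ∈ S, (p:ℝ)/((p:ℝ)-1))) := (Real.exp_log hPpos).symm
    _ < Real.exp (Real.log L + Real.eulerMascheroniConstant + 0.005586/L^2) :=
        Real.exp_lt_exp.mpr h1
    _ = L * (Eg * Ex) := by
        rw [Real.exp_add, Real.exp_add, Real.exp_log hL0, hEg, hEx, mul_assoc]
  have hNL : (0:ℝ) < (N:ℝ) * L := by positivity
  have hfin : Eg * Ex ≤ Eg + 0.00995/L^2 := final_numeric L hL30
  have hG : G N = (∑ d ∈ N.divisors, (d:ℝ)) / ((N:ℝ) * L) := rfl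
  rw [hG, div_lt_iff₀ hNL]
  have c1 : (∑ d ∈ N.divisors, (d:ℝ)) ≤ (N:ℝ) * ∏ p ∈ S, (p:ℝ)/((p:ℝ)-1) :=
    le_trans hchain1 (mul_le_mul_of_nonneg_left hchain2 hN0.le)
  have c2 : (N:ℝ) * ∏ p ∈ S, (p:ℝ)/((p:ℝ)-1) < (N:ℝ) * (L * (Eg * Ex)) :=
    mul_lt_mul_of_pos_left hPlt hN0
  have c3 : (N:ℝ) * (L * (Eg * Ex)) ≤ (Eg + 0.00995/L^2) * ((N:ℝ) * L) := by
    nlinarith [hfin, hNL]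
  linarith
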